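/- Let G = (Z/2)^3 and let H^*(BG; F_2) = F_2[x,y,z] be its mod-2 cohomology ring with x, y, z of degree 1. The element f = x^4 + (x+y+z)xyz ∈ H^4 satisfies Sq^1(f) = 0, but Sq^3(f) is not divisible by f in F_2[x,y,z]. -/

import Mathlib

open MvPolynomial

noncomputable section

/-- The total Steenrod square on `H^*(B(Z/2)^3; F₂) = F₂[x,y,z]`: the `F₂`-algebra endomorphism
determined by `v ↦ v + v²` on degree-one generators.  For `f` homogeneous of degree `n`,
`Sqᵏ f` is the homogeneous component of degree `n + k` of `totalSq f`. -/
def totalSq : MvPolynomial (Fin 3) (ZMod 2) →ₐ[ZMod 2] MvPolynomial (Fin 3) (ZMod 2) :=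
  aeval (fun i => X i + X i ^ 2)

/-- The class `f = x⁴ + (x+y+z)·xyz` of degree 4. -/
def fCarlsson : MvPolynomial (Fin 3) (ZMod 2) :=
  X 0 ^ 4 + (X 0 + X 1 + X 2) * (X 0 * X 1 * X 2)

namespace CarlssonAux

lemma two_eq_zero (A : Type*) [CommRing A] [Algebra (ZMod 2) A] : (2 : A) = 0 := by
  calc (2 : A) = algebraMap (ZMod 2) A 2 := (map_ofNat _ 2).symm
    _ = algebraMap (ZMod 2) A 0 := by rw [show (2 : ZMod 2) = 0 from rfl]
    _ = 0 := map_zero _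

local notation "R" => MvPolynomial (Fin 3) (ZMod 2)

/-- Degree 6 part of totalSq fCarlsson. -/
def P6 : R := X 0 * X 1 * X 2 * (X 0 ^ 3 + X 1 ^ 3 + X 2 ^ 3 + X 0 * X 1 * X 2)

/-- Degree 7 part of totalSq fCarlsson. -/
def P7 : R := X 0 ^ 4 * X 1 ^ 2 * X 2 + X 0 ^ 4 * X 1 * X 2 ^ 2 + X 0 ^ 2 * X 1 ^ 4 * X 2
  + X 0 * X 1 ^ 4 * X 2 ^ 2 + X 0 ^ 2 * X 1 * X 2 ^ 4 + X 0 * X 1 ^ 2 * X 2 ^ 4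

/-- Degree 8 part of totalSq fCarlsson. -/
def P8 : R := X 0 ^ 8 + (X 0 + X 1 + X 2) ^ 2 * (X 0 * X 1 * X 2) ^ 2

lemma decomp : totalSq fCarlsson = fCarlsson + P6 + P7 + P8 := by
  have h2 : (2 : R) = 0 := two_eq_zero R
  simp only [totalSq, fCarlsson, P6, P7, P8, map_add, map_mul, map_pow, aeval_X]
  linear_combination (X 0*X 1*X 2^3 + X 0*X 1^2*X 2^2 + X 0*X 1^2*X 2^3 + X 0*X 1^3*X 2
    + X 0*X 1^3*X 2^2 + X 0^2*X 1*X 2^2 + X 0^2*X 1*X 2^3 + X 0^2*X 1^2*X 2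
    + X 0^2*X 1^2*X 2^2 + X 0^2*X 1^2*X 2^3 + X 0^2*X 1^3*X 2 + X 0^2*X 1^3*X 2^2
    - X 0^2*X 1^3*X 2^3 + X 0^3*X 1*X 2 + X 0^3*X 1*X 2^2 + X 0^3*X 1^2*X 2
    + X 0^3*X 1^2*X 2^2 - X 0^3*X 1^2*X 2^3 - X 0^3*X 1^3*X 2^2
    + (2:R)*X 0^5 + 3*X 0^6 + 2*X 0^7) * h2

lemma hX (i : Fin 3) : (X i : R).IsHomogeneous 1 := isHomogeneous_X _ _

lemma hf4 : (fCarlsson).IsHomogeneous 4 := by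
  have := ((hX 0).pow 4).add
    ((((hX 0).add (hX 1)).add (hX 2)).mul (((hX 0).mul (hX 1)).mul (hX 2)))
  norm_num at this
  exact this

lemma hP6 : (P6 : R).IsHomogeneous 6 := by
  have := (((hX 0).mul (hX 1)).mul (hX 2)).mul
    (((((hX 0).pow 3).add ((hX 1).pow 3)).add ((hX 2).pow 3)).add
      (((hX 0).mul (hX 1)).mul (hX 2)))
  norm_num at this
  exact this

lemma hP7 : (P7 : R).IsHomogeneous 7 := by
  have h1 := (((hX 0).pow 4).mul ((hX 1).pow 2)).mul (hX 2)
  have h2 := (((hX 0).pow 4).mul (hX 1)).mul ((hX 2).pow 2)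
  have h3 := (((hX 0).pow 2).mul ((hX 1).pow 4)).mul (hX 2)
  have h4 := ((hX 0).mul ((hX 1).pow 4)).mul ((hX 2).pow 2)
  have h5 := (((hX 0).pow 2).mul (hX 1)).mul ((hX 2).pow 4)
  have h6 := ((hX 0).mul ((hX 1).pow 2)).mul ((hX 2).pow 4)
  have := ((((h1.add h2).add h3).add h4).add h5).add h6
  norm_num at this
  exact this

lemma hP8 : (P8 : R).IsHomogeneous 8 := by
  have := ((hX 0).pow 8).add
    (((((hX 0).add (hX 1)).add (hX 2)).pow 2).mul ((((hX 0).mul (hX 1)).mul (hX 2)).pow 2))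
  norm_num at this
  exact this

lemma hc5 : homogeneousComponent 5 (totalSq fCarlsson) = 0 := by
  rw [decomp, map_add, map_add, map_add,
    homogeneousComponent_of_mem ((mem_homogeneousSubmodule _ _).2 hf4),
    homogeneousComponent_of_mem ((mem_homogeneousSubmodule _ _).2 hP6),
    homogeneousComponent_of_mem ((mem_homogeneousSubmodule _ _).2 hP7),
    homogeneousComponent_of_mem ((mem_homogeneousSubmodule _ _).2 hP8)]
  norm_num

lemma hc7 : homogeneousComponent 7 (totalSq fCarlsson) = P7 := by
  rw [decomp, map_add, map_add, map_add,
    homogeneousComponent_of_mem ((mem_homogeneousSubmodule _ _).2 hf4),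
    homogeneousComponent_of_mem ((mem_homogeneousSubmodule _ _).2 hP6),
    homogeneousComponent_of_mem ((mem_homogeneousSubmodule _ _).2 hP7),
    homogeneousComponent_of_mem ((mem_homogeneousSubmodule _ _).2 hP8)]
  norm_num

/-- The Galois field GF(8) as `F₂[t]/(t³+t+1)`. -/
def q : Polynomial (ZMod 2) := Polynomial.X ^ 3 + Polynomial.X + 1

local notation "K" => AdjoinRoot q

def u : K := AdjoinRoot.root q

lemma hu : u ^ 3 + u + 1 = 0 := by
  have h := AdjoinRoot.mk_self (f := q)
  rw [show q = Polynomial.X ^ 3 + Polynomial.X + 1 from rfl] at h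
  simp [u, map_add, map_pow, map_one] at h
  exact h

lemma hdeg : q.degree = 3 := by
  unfold q
  compute_degree!

instance : Nontrivial K :=
  AdjoinRoot.nontrivial q (by rw [hdeg]; decide)

def v : Fin 3 → K := ![1, 1 + u, 1 + u ^ 2]

lemma hf0 : aeval v fCarlsson = 0 := by
  have h2 : (2 : K) = 0 := two_eq_zero _
  have hroot := hu
  simp only [fCarlsson, map_add, map_mul, map_pow, aeval_X]
  show (v 0) ^ 4 + (v 0 + v 1 + v 2) * (v 0 * v 1 * v 2) = 0
  show (1 : K) ^ 4 + (1 + (1 + u) + (1 + u ^ 2)) * (1 * (1 + u) * (1 + u ^ 2)) = 0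
  linear_combination (u ^ 2) * hroot + (2 + 2*u + 2*u^2 + 2*u^3 + u^4) * h2

lemma hS1 : aeval v P7 = 1 := by
  have h2 : (2 : K) = 0 := two_eq_zero _
  have hroot := hu
  simp only [P7, map_add, map_mul, map_pow, aeval_X]
  show (v 0)^4*(v 1)^2*(v 2) + (v 0)^4*(v 1)*(v 2)^2 + (v 0)^2*(v 1)^4*(v 2)
    + (v 0)*(v 1)^4*(v 2)^2 + (v 0)^2*(v 1)*(v 2)^4 + (v 0)*(v 1)^2*(v 2)^4 = 1
  show (1:K)^4*(1+u)^2*(1+u^2) + (1:K)^4*(1+u)*(1+u^2)^2 + (1:K)^2*(1+u)^4*(1+u^2)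
    + (1:K)*(1+u)^4*(1+u^2)^2 + (1:K)^2*(1+u)*(1+u^2)^4 + (1:K)*(1+u)^2*(1+u^2)^4 = 1
  linear_combination (u^7 + u^6 + u^2 + u + 1) * hroot
    + (2 + 6*u + 13*u^2 + 17*u^3 + 19*u^4 + 17*u^5 + 11*u^6 + 7*u^7 + 3*u^8 + u^9) * h2

end CarlssonAux

/-- In `H^*(B(Z/2)³; F₂) = F₂[x,y,z]`, the degree-4 element
`f = x⁴ + (x+y+z)xyz` satisfies `Sq¹(f) = 0` (the degree-5 component of the total square),
but `Sq³(f)` (the degree-7 component of the total square) is not divisible by `f`. -/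
theorem carlsson_class_sq_one_zero_sq_three_not_divisible :
    homogeneousComponent 5 (totalSq fCarlsson) = 0 ∧
    ¬ fCarlsson ∣ homogeneousComponent 7 (totalSq fCarlsson) := by
  refine ⟨CarlssonAux.hc5, ?_⟩
  rintro ⟨g, hg⟩
  rw [CarlssonAux.hc7] at hg
  have h1 : aeval CarlssonAux.v CarlssonAux.P7
      = aeval CarlssonAux.v fCarlsson * aeval CarlssonAux.v g := by
    rw [hg, map_mul]
  rw [CarlssonAux.hS1, CarlssonAux.hf0, zero_mul] at h1
  exact one_ne_zero h1

end
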